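/- Let (V,R) and (W,S) be quadratic data with R ⊆ V⊗V, S ⊆ W⊗W. Define the black product (V,R)•(W,S) = (V⊗W, S₍₂₃₎(R⊗S)) where S₍₂₃₎ : V⊗V⊗W⊗W → (V⊗W)⊗(V⊗W) swaps the middle two tensor factors, and define (V,R) ⊗̲ (W,S) = (V⊕W, R ⊕ [V,W]₊ ⊕ S) where [V,W]₊ is spanned by v⊗w + w⊗v. Then the linear map pr₁₄ : (A₁⊕A₁')⊗(B₁⊕B₁') → (A₁⊗B₁)⊕(A₁'⊗B₁') satisfies pr₁₄⊗pr₁₄ applied to the relation space of (A ⊗̲ A') • (B ⊗̲ B') lands inside the relation space of (A•B) ⊗̲ (A'•B'), for all quadratic data A, A', B, B'. -/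

import Mathlib

open TensorProduct

variable (K : Type*) [Field K]

section Defs

variable (X Y : Type*) [AddCommGroup X] [Module K X] [AddCommGroup Y] [Module K Y]

/-- `[X, Y]₊ ⊆ (X ⊕ Y) ⊗ (X ⊕ Y)`: the span of the elements `x ⊗ y + y ⊗ x`. -/
noncomputable def plusSpan : Submodule K ((X × Y) ⊗[K] (X × Y)) :=
  Submodule.span K {z | ∃ (x : X) (y : Y),
    z = (LinearMap.inl K X Y x) ⊗ₜ[K] (LinearMap.inr K X Y y)
      + (LinearMap.inr K X Y y) ⊗ₜ[K] (LinearMap.inl K X Y x)}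

/-- The relation space `R ⊕ [X,Y]₊ ⊕ S` of the quadratic datum
`(X, R) ⊗̲ (Y, S) = (X ⊕ Y, R ⊕ [X,Y]₊ ⊕ S)`. -/
noncomputable def uplusRel (R : Submodule K (X ⊗[K] X)) (S : Submodule K (Y ⊗[K] Y)) :
    Submodule K ((X × Y) ⊗[K] (X × Y)) :=
  Submodule.map (TensorProduct.map (LinearMap.inl K X Y) (LinearMap.inl K X Y)) R
    ⊔ plusSpan K X Y
    ⊔ Submodule.map (TensorProduct.map (LinearMap.inr K X Y) (LinearMap.inr K X Y)) S

/-- The subspace `R ⊗ S ⊆ (X ⊗ X) ⊗ (Y ⊗ Y)`. -/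
noncomputable def tensorOfSubmodules (R : Submodule K (X ⊗[K] X))
    (S : Submodule K (Y ⊗[K] Y)) : Submodule K ((X ⊗[K] X) ⊗[K] (Y ⊗[K] Y)) :=
  LinearMap.range (TensorProduct.map R.subtype S.subtype)

/-- The relation space `S₍₂₃₎(R ⊗ S)` of the black product
`(X, R) • (Y, S) = (X ⊗ Y, S₍₂₃₎(R ⊗ S))`, where `S₍₂₃₎` swaps the two middle tensor
factors. -/
noncomputable def blackRel (R : Submodule K (X ⊗[K] X)) (S : Submodule K (Y ⊗[K] Y)) :
    Submodule K ((X ⊗[K] Y) ⊗[K] (X ⊗[K] Y)) :=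
  Submodule.map (TensorProduct.tensorTensorTensorComm K X X Y Y).toLinearMap
    (tensorOfSubmodules K X Y R S)

end Defs

variable (A A' B B' : Type*)
  [AddCommGroup A] [Module K A] [AddCommGroup A'] [Module K A']
  [AddCommGroup B] [Module K B] [AddCommGroup B'] [Module K B']

/-- The canonical projection
`pr₁₄ : (A ⊕ A') ⊗ (B ⊕ B') → (A ⊗ B) ⊕ (A' ⊗ B')`. -/
noncomputable def pr14 : (A × A') ⊗[K] (B × B') →ₗ[K] (A ⊗[K] B) × (A' ⊗[K] B') :=
  LinearMap.prod
    (TensorProduct.map (LinearMap.fst K A A') (LinearMap.fst K B B'))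
    (TensorProduct.map (LinearMap.snd K A A') (LinearMap.snd K B B'))

section AuxNat

variable {K} {M1 M2 M3 M4 N1 N2 N3 N4 : Type*}
  [AddCommGroup M1] [Module K M1] [AddCommGroup M2] [Module K M2]
  [AddCommGroup M3] [Module K M3] [AddCommGroup M4] [Module K M4]
  [AddCommGroup N1] [Module K N1] [AddCommGroup N2] [Module K N2]
  [AddCommGroup N3] [Module K N3] [AddCommGroup N4] [Module K N4]

theorem aux_ttt_natural (f1 : M1 →ₗ[K] N1) (f2 : M2 →ₗ[K] N2) (f3 : M3 →ₗ[K] N3)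
    (f4 : M4 →ₗ[K] N4) :
    (TensorProduct.tensorTensorTensorComm K N1 N2 N3 N4).toLinearMap ∘ₗ
      TensorProduct.map (TensorProduct.map f1 f2) (TensorProduct.map f3 f4)
    = TensorProduct.map (TensorProduct.map f1 f3) (TensorProduct.map f2 f4) ∘ₗ
      (TensorProduct.tensorTensorTensorComm K M1 M2 M3 M4).toLinearMap := by
  ext m1 m2 m3 m4
  simp

end AuxNat

section Aux

variable {K A A' B B'}

/-- The big map `pr₁₄ ⊗ pr₁₄ ∘ S₍₂₃₎`. -/
noncomputable def Fbig : ((A × A') ⊗[K] (A × A')) ⊗[K] ((B × B') ⊗[K] (B × B')) →ₗ[K]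
    ((A ⊗[K] B) × (A' ⊗[K] B')) ⊗[K] ((A ⊗[K] B) × (A' ⊗[K] B')) :=
  TensorProduct.map (pr14 K A A' B B') (pr14 K A A' B B') ∘ₗ
    (TensorProduct.tensorTensorTensorComm K (A × A') (A × A') (B × B') (B × B')).toLinearMap

theorem aux_pr14_ll : (pr14 K A A' B B') ∘ₗ
    TensorProduct.map (LinearMap.inl K A A') (LinearMap.inl K B B')
    = LinearMap.inl K (A ⊗[K] B) (A' ⊗[K] B') := by
  apply TensorProduct.ext'; intro a b; simp [pr14]

theorem aux_pr14_rr : (pr14 K A A' B B') ∘ₗ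
    TensorProduct.map (LinearMap.inr K A A') (LinearMap.inr K B B')
    = LinearMap.inr K (A ⊗[K] B) (A' ⊗[K] B') := by
  apply TensorProduct.ext'; intro a b; simp [pr14]

theorem aux_pr14_lr : (pr14 K A A' B B') ∘ₗ
    TensorProduct.map (LinearMap.inl K A A') (LinearMap.inr K B B') = 0 := by
  apply TensorProduct.ext'; intro a b; simp [pr14]

theorem aux_pr14_rl : (pr14 K A A' B B') ∘ₗ
    TensorProduct.map (LinearMap.inr K A A') (LinearMap.inl K B B') = 0 := by
  apply TensorProduct.ext'; intro a b; simp [pr14]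

theorem aux_F_apply {P Q R S : Type*} [AddCommGroup P] [Module K P] [AddCommGroup Q] [Module K Q]
    [AddCommGroup R] [Module K R] [AddCommGroup S] [Module K S]
    (f1 : P →ₗ[K] A × A') (f2 : Q →ₗ[K] A × A') (g1 : R →ₗ[K] B × B') (g2 : S →ₗ[K] B × B')
    (x : P ⊗[K] Q) (y : R ⊗[K] S) :
    Fbig ((TensorProduct.map f1 f2 x) ⊗ₜ[K] (TensorProduct.map g1 g2 y))
    = TensorProduct.map ((pr14 K A A' B B') ∘ₗ TensorProduct.map f1 g1)
        ((pr14 K A A' B B') ∘ₗ TensorProduct.map f2 g2)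
        ((TensorProduct.tensorTensorTensorComm K P Q R S).toLinearMap (x ⊗ₜ[K] y)) := by
  have h := LinearMap.congr_fun (aux_ttt_natural (K := K) f1 f2 g1 g2) (x ⊗ₜ[K] y)
  simp only [LinearMap.comp_apply, TensorProduct.map_tmul] at h
  rw [Fbig, LinearMap.comp_apply, h, TensorProduct.map_comp, LinearMap.comp_apply]

end Aux

section Main

variable {K A A' B B'}
variable (RA : Submodule K (A ⊗[K] A)) (RA' : Submodule K (A' ⊗[K] A'))
  (RB : Submodule K (B ⊗[K] B)) (RB' : Submodule K (B' ⊗[K] B'))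

/-- Target relation space. -/
noncomputable def Tbig : Submodule K
    (((A ⊗[K] B) × (A' ⊗[K] B')) ⊗[K] ((A ⊗[K] B) × (A' ⊗[K] B'))) :=
  uplusRel K (A ⊗[K] B) (A' ⊗[K] B') (blackRel K A B RA RB) (blackRel K A' B' RA' RB')

theorem mem_T_inl {z : (A ⊗[K] B) ⊗[K] (A ⊗[K] B)} (hz : z ∈ blackRel K A B RA RB) :
    TensorProduct.map (LinearMap.inl K (A ⊗[K] B) (A' ⊗[K] B'))
      (LinearMap.inl K (A ⊗[K] B) (A' ⊗[K] B')) z ∈ Tbig RA RA' RB RB' := by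
  simp only [Tbig, uplusRel]
  exact Submodule.mem_sup_left (Submodule.mem_sup_left ⟨z, hz, rfl⟩)

theorem mem_T_inr {z : (A' ⊗[K] B') ⊗[K] (A' ⊗[K] B')} (hz : z ∈ blackRel K A' B' RA' RB') :
    TensorProduct.map (LinearMap.inr K (A ⊗[K] B) (A' ⊗[K] B'))
      (LinearMap.inr K (A ⊗[K] B) (A' ⊗[K] B')) z ∈ Tbig RA RA' RB RB' := by
  simp only [Tbig, uplusRel]
  exact Submodule.mem_sup_right ⟨z, hz, rfl⟩

theorem mem_T_plus (x : A ⊗[K] B) (y : A' ⊗[K] B') :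
    (LinearMap.inl K (A ⊗[K] B) (A' ⊗[K] B') x) ⊗ₜ[K]
        (LinearMap.inr K (A ⊗[K] B) (A' ⊗[K] B') y)
      + (LinearMap.inr K (A ⊗[K] B) (A' ⊗[K] B') y) ⊗ₜ[K]
        (LinearMap.inl K (A ⊗[K] B) (A' ⊗[K] B') x) ∈ Tbig RA RA' RB RB' := by
  simp only [Tbig, uplusRel]
  exact Submodule.mem_sup_left (Submodule.mem_sup_right
    (Submodule.subset_span ⟨x, y, rfl⟩))

theorem mem_black {X Y : Type*} [AddCommGroup X] [Module K X] [AddCommGroup Y] [Module K Y]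
    {R : Submodule K (X ⊗[K] X)} {S : Submodule K (Y ⊗[K] Y)}
    {x : X ⊗[K] X} {y : Y ⊗[K] Y} (hx : x ∈ R) (hy : y ∈ S) :
    (TensorProduct.tensorTensorTensorComm K X X Y Y).toLinearMap (x ⊗ₜ[K] y)
      ∈ blackRel K X Y R S :=
  ⟨x ⊗ₜ[K] y, ⟨(⟨x, hx⟩ : R) ⊗ₜ[K] (⟨y, hy⟩ : S), by simp⟩, rfl⟩

theorem g11 : ∀ ra ∈ RA, ∀ sb ∈ RB,
    Fbig ((TensorProduct.map (LinearMap.inl K A A') (LinearMap.inl K A A') ra) ⊗ₜ[K]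
      (TensorProduct.map (LinearMap.inl K B B') (LinearMap.inl K B B') sb))
      ∈ Tbig RA RA' RB RB' := by
  intro ra hra sb hsb
  rw [aux_F_apply, aux_pr14_ll]
  exact mem_T_inl RA RA' RB RB' (mem_black hra hsb)

theorem g33 : ∀ ra ∈ RA', ∀ sb ∈ RB',
    Fbig ((TensorProduct.map (LinearMap.inr K A A') (LinearMap.inr K A A') ra) ⊗ₜ[K]
      (TensorProduct.map (LinearMap.inr K B B') (LinearMap.inr K B B') sb))
      ∈ Tbig RA RA' RB RB' := by
  intro ra hra sb hsb
  rw [aux_F_apply, aux_pr14_rr]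
  exact mem_T_inr RA RA' RB RB' (mem_black hra hsb)

theorem g13 : ∀ (ra : A ⊗[K] A) (sb : B' ⊗[K] B'),
    Fbig ((TensorProduct.map (LinearMap.inl K A A') (LinearMap.inl K A A') ra) ⊗ₜ[K]
      (TensorProduct.map (LinearMap.inr K B B') (LinearMap.inr K B B') sb)) = 0 := by
  intro ra sb
  rw [aux_F_apply, aux_pr14_lr, TensorProduct.map_zero_left, LinearMap.zero_apply]

theorem g31 : ∀ (ra : A' ⊗[K] A') (sb : B ⊗[K] B),
    Fbig ((TensorProduct.map (LinearMap.inr K A A') (LinearMap.inr K A A') ra) ⊗ₜ[K]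
      (TensorProduct.map (LinearMap.inl K B B') (LinearMap.inl K B B') sb)) = 0 := by
  intro ra sb
  rw [aux_F_apply, aux_pr14_rl, TensorProduct.map_zero_left, LinearMap.zero_apply]

theorem eB : ∀ (b : B) (b' : B'),
    ((LinearMap.inl K B B' b) ⊗ₜ[K] (LinearMap.inr K B B' b')
      + (LinearMap.inr K B B' b') ⊗ₜ[K] (LinearMap.inl K B B' b) :
        (B × B') ⊗[K] (B × B'))
    = TensorProduct.map (LinearMap.inl K B B') (LinearMap.inr K B B') (b ⊗ₜ[K] b')
      + TensorProduct.map (LinearMap.inr K B B') (LinearMap.inl K B B') (b' ⊗ₜ[K] b) := by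
  intro b b'; simp

theorem eA : ∀ (a : A) (a' : A'),
    ((LinearMap.inl K A A' a) ⊗ₜ[K] (LinearMap.inr K A A' a')
      + (LinearMap.inr K A A' a') ⊗ₜ[K] (LinearMap.inl K A A' a) :
        (A × A') ⊗[K] (A × A'))
    = TensorProduct.map (LinearMap.inl K A A') (LinearMap.inr K A A') (a ⊗ₜ[K] a')
      + TensorProduct.map (LinearMap.inr K A A') (LinearMap.inl K A A') (a' ⊗ₜ[K] a) := by
  intro a a'; simp

theorem g12 : ∀ (ra : A ⊗[K] A) (b : B) (b' : B'),
    Fbig ((TensorProduct.map (LinearMap.inl K A A') (LinearMap.inl K A A') ra) ⊗ₜ[K]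
      ((LinearMap.inl K B B' b) ⊗ₜ[K] (LinearMap.inr K B B' b')
        + (LinearMap.inr K B B' b') ⊗ₜ[K] (LinearMap.inl K B B' b))) = 0 := by
  intro ra b b'
  rw [eB, tmul_add, map_add, aux_F_apply, aux_F_apply]
  simp [aux_pr14_lr, aux_pr14_rl, TensorProduct.map_zero_left, TensorProduct.map_zero_right]

theorem g32 : ∀ (ra : A' ⊗[K] A') (b : B) (b' : B'),
    Fbig ((TensorProduct.map (LinearMap.inr K A A') (LinearMap.inr K A A') ra) ⊗ₜ[K]
      ((LinearMap.inl K B B' b) ⊗ₜ[K] (LinearMap.inr K B B' b')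
        + (LinearMap.inr K B B' b') ⊗ₜ[K] (LinearMap.inl K B B' b))) = 0 := by
  intro ra b b'
  rw [eB, tmul_add, map_add, aux_F_apply, aux_F_apply]
  simp [aux_pr14_lr, aux_pr14_rl, TensorProduct.map_zero_left, TensorProduct.map_zero_right]

theorem g21 : ∀ (a : A) (a' : A') (sb : B ⊗[K] B),
    Fbig (((LinearMap.inl K A A' a) ⊗ₜ[K] (LinearMap.inr K A A' a')
        + (LinearMap.inr K A A' a') ⊗ₜ[K] (LinearMap.inl K A A' a)) ⊗ₜ[K]
      (TensorProduct.map (LinearMap.inl K B B') (LinearMap.inl K B B') sb)) = 0 := by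
  intro a a' sb
  rw [eA, add_tmul, map_add, aux_F_apply, aux_F_apply]
  simp [aux_pr14_lr, aux_pr14_rl, TensorProduct.map_zero_left, TensorProduct.map_zero_right]

theorem g23 : ∀ (a : A) (a' : A') (sb : B' ⊗[K] B'),
    Fbig (((LinearMap.inl K A A' a) ⊗ₜ[K] (LinearMap.inr K A A' a')
        + (LinearMap.inr K A A' a') ⊗ₜ[K] (LinearMap.inl K A A' a)) ⊗ₜ[K]
      (TensorProduct.map (LinearMap.inr K B B') (LinearMap.inr K B B') sb)) = 0 := by
  intro a a' sb
  rw [eA, add_tmul, map_add, aux_F_apply, aux_F_apply]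
  simp [aux_pr14_lr, aux_pr14_rl, TensorProduct.map_zero_left, TensorProduct.map_zero_right]

set_option maxHeartbeats 1000000 in
theorem g22 : ∀ (a : A) (a' : A') (b : B) (b' : B'),
    Fbig (((LinearMap.inl K A A' a) ⊗ₜ[K] (LinearMap.inr K A A' a')
        + (LinearMap.inr K A A' a') ⊗ₜ[K] (LinearMap.inl K A A' a)) ⊗ₜ[K]
      ((LinearMap.inl K B B' b) ⊗ₜ[K] (LinearMap.inr K B B' b')
        + (LinearMap.inr K B B' b') ⊗ₜ[K] (LinearMap.inl K B B' b)))
      ∈ Tbig RA RA' RB RB' := by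
  intro a a' b b'
  have h : Fbig (((LinearMap.inl K A A' a) ⊗ₜ[K] (LinearMap.inr K A A' a')
        + (LinearMap.inr K A A' a') ⊗ₜ[K] (LinearMap.inl K A A' a)) ⊗ₜ[K]
      ((LinearMap.inl K B B' b) ⊗ₜ[K] (LinearMap.inr K B B' b')
        + (LinearMap.inr K B B' b') ⊗ₜ[K] (LinearMap.inl K B B' b)))
      = (LinearMap.inl K (A ⊗[K] B) (A' ⊗[K] B') (a ⊗ₜ[K] b)) ⊗ₜ[K]
          (LinearMap.inr K (A ⊗[K] B) (A' ⊗[K] B') (a' ⊗ₜ[K] b'))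
        + (LinearMap.inr K (A ⊗[K] B) (A' ⊗[K] B') (a' ⊗ₜ[K] b')) ⊗ₜ[K]
          (LinearMap.inl K (A ⊗[K] B) (A' ⊗[K] B') (a ⊗ₜ[K] b)) := by
    simp [Fbig, pr14, tmul_add, add_tmul]
    rw [show ((0, 0) : (A ⊗[K] B) × (A' ⊗[K] B')) = 0 from rfl, tmul_zero, add_zero, zero_add]
  rw [h]
  exact mem_T_plus RA RA' RB RB' _ _

theorem plusR : ∀ (r : (A × A') ⊗[K] (A × A')),
    (∀ (b : B) (b' : B'),
      Fbig (r ⊗ₜ[K] ((LinearMap.inl K B B' b) ⊗ₜ[K] (LinearMap.inr K B B' b')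
        + (LinearMap.inr K B B' b') ⊗ₜ[K] (LinearMap.inl K B B' b)))
        ∈ Tbig RA RA' RB RB') →
    ∀ s ∈ plusSpan K B B', Fbig (r ⊗ₜ[K] s) ∈ Tbig RA RA' RB RB' := by
  intro r hgen s hs
  have h : plusSpan K B B' ≤ Submodule.comap
      (Fbig ∘ₗ TensorProduct.mk K ((A × A') ⊗[K] (A × A')) ((B × B') ⊗[K] (B × B')) r)
      (Tbig RA RA' RB RB') := by
    rw [plusSpan, Submodule.span_le]
    rintro _ ⟨b, b', rfl⟩
    exact hgen b b'
  exact h hs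

theorem plusL : ∀ (s : (B × B') ⊗[K] (B × B')),
    (∀ (a : A) (a' : A'),
      Fbig (((LinearMap.inl K A A' a) ⊗ₜ[K] (LinearMap.inr K A A' a')
        + (LinearMap.inr K A A' a') ⊗ₜ[K] (LinearMap.inl K A A' a)) ⊗ₜ[K] s)
        ∈ Tbig RA RA' RB RB') →
    ∀ r ∈ plusSpan K A A', Fbig (r ⊗ₜ[K] s) ∈ Tbig RA RA' RB RB' := by
  intro s hgen r hr
  have h : plusSpan K A A' ≤ Submodule.comap
      (Fbig ∘ₗ (TensorProduct.mk K ((A × A') ⊗[K] (A × A'))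
        ((B × B') ⊗[K] (B × B'))).flip s)
      (Tbig RA RA' RB RB') := by
    rw [plusSpan, Submodule.span_le]
    rintro _ ⟨a, a', rfl⟩
    exact hgen a a'
  exact h hr

set_option maxHeartbeats 2000000 in
theorem aux_main :
    ∀ r ∈ uplusRel K A A' RA RA', ∀ s ∈ uplusRel K B B' RB RB',
      Fbig (r ⊗ₜ[K] s) ∈ Tbig RA RA' RB RB' := by
  intro r hr s hs
  rw [uplusRel, Submodule.mem_sup] at hr hs
  obtain ⟨r12, hr12, r3, hr3, rfl⟩ := hr
  obtain ⟨s12, hs12, s3, hs3, rfl⟩ := hs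
  rw [Submodule.mem_sup] at hr12 hs12
  obtain ⟨r1, hr1, r2, hr2, rfl⟩ := hr12
  obtain ⟨s1, hs1, s2, hs2, rfl⟩ := hs12
  obtain ⟨ra, hra, rfl⟩ := hr1
  obtain ⟨ra', hra', rfl⟩ := hr3
  obtain ⟨sb, hsb, rfl⟩ := hs1
  obtain ⟨sb', hsb', rfl⟩ := hs3
  simp only [add_tmul, tmul_add, map_add]
  have h11 := g11 RA RA' RB RB' ra hra sb hsb
  have h12 := plusR RA RA' RB RB'
    (TensorProduct.map (LinearMap.inl K A A') (LinearMap.inl K A A') ra)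
    (fun b b' => by rw [g12]; exact zero_mem _) s2 hs2
  have h13 : Fbig ((TensorProduct.map (LinearMap.inl K A A') (LinearMap.inl K A A') ra) ⊗ₜ[K]
      (TensorProduct.map (LinearMap.inr K B B') (LinearMap.inr K B B') sb'))
      ∈ Tbig RA RA' RB RB' := by rw [g13]; exact zero_mem _
  have h21 := plusL RA RA' RB RB'
    (TensorProduct.map (LinearMap.inl K B B') (LinearMap.inl K B B') sb)
    (fun a a' => by rw [g21]; exact zero_mem _) r2 hr2
  have h22 := plusL RA RA' RB RB' s2 (fun a a' =>
    plusR RA RA' RB RB'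
      ((LinearMap.inl K A A' a) ⊗ₜ[K] (LinearMap.inr K A A' a')
        + (LinearMap.inr K A A' a') ⊗ₜ[K] (LinearMap.inl K A A' a))
      (fun b b' => g22 RA RA' RB RB' a a' b b') s2 hs2) r2 hr2
  have h23 := plusL RA RA' RB RB'
    (TensorProduct.map (LinearMap.inr K B B') (LinearMap.inr K B B') sb')
    (fun a a' => by rw [g23]; exact zero_mem _) r2 hr2
  have h31 : Fbig ((TensorProduct.map (LinearMap.inr K A A') (LinearMap.inr K A A') ra') ⊗ₜ[K]
      (TensorProduct.map (LinearMap.inl K B B') (LinearMap.inl K B B') sb))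
      ∈ Tbig RA RA' RB RB' := by rw [g31]; exact zero_mem _
  have h32 := plusR RA RA' RB RB'
    (TensorProduct.map (LinearMap.inr K A A') (LinearMap.inr K A A') ra')
    (fun b b' => by rw [g32]; exact zero_mem _) s2 hs2
  have h33 := g33 RA RA' RB RB' ra' hra' sb' hsb'
  exact Submodule.add_mem _ (Submodule.add_mem _
      (Submodule.add_mem _ (Submodule.add_mem _ h11 h21) h31)
      (Submodule.add_mem _ (Submodule.add_mem _ h12 h22) h32))
    (Submodule.add_mem _ (Submodule.add_mem _ h13 h23) h33)

end Main

/-- For quadratic data `A = (A₁, R(A))`, `A' = (A₁', R(A'))`,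
`B = (B₁, R(B))`, `B' = (B₁', R(B'))`, the map `pr₁₄ ⊗ pr₁₄` applied to the relation space of
`(A ⊗̲ A') • (B ⊗̲ B')`, namely
`S₍₂₃₎((R(A) ⊕ [A₁,A₁']₊ ⊕ R(A')) ⊗ (R(B) ⊕ [B₁,B₁']₊ ⊕ R(B')))`,
lands inside the relation space of `(A • B) ⊗̲ (A' • B')`, namely
`S₍₂₃₎(R(A) ⊗ R(B)) ⊕ [A₁⊗B₁, A₁'⊗B₁']₊ ⊕ S₍₂₃₎(R(A') ⊗ R(B'))`. -/
theorem pr14_interchange_on_relations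
    (RA : Submodule K (A ⊗[K] A)) (RA' : Submodule K (A' ⊗[K] A'))
    (RB : Submodule K (B ⊗[K] B)) (RB' : Submodule K (B' ⊗[K] B')) :
    Submodule.map
      (TensorProduct.map (pr14 K A A' B B') (pr14 K A A' B B'))
      (Submodule.map
        (TensorProduct.tensorTensorTensorComm K (A × A') (A × A') (B × B') (B × B')).toLinearMap
        (tensorOfSubmodules K ((A × A')) ((B × B'))
          (uplusRel K A A' RA RA') (uplusRel K B B' RB RB')))
      ≤ uplusRel K (A ⊗[K] B) (A' ⊗[K] B')
          (blackRel K A B RA RB) (blackRel K A' B' RA' RB') := by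
  rintro _ ⟨_, ⟨y, ⟨z, rfl⟩, rfl⟩, rfl⟩
  show Fbig _ ∈ Tbig RA RA' RB RB'
  induction z using TensorProduct.induction_on with
  | zero => simp only [map_zero]; exact zero_mem _
  | add u v hu hv => simp only [map_add]; exact add_mem hu hv
  | tmul r s =>
    simp only [TensorProduct.map_tmul, Submodule.coe_subtype]
    exact aux_main RA RA' RB RB' r r.2 s s.2
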